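/- The stabilizer in R = GL_2(F) ⊠ GSp_4(F) of the 2-dimensional totally isotropic subspace span{f_1+f_3, f_2} ⊆ F^6 (for the right action via ι) equals exactly the set {([[a,b],[0,d]], diag(α,a,d,δ)·u) : a, d, α, δ ∈ F^×, b ∈ F, a·d = α·δ, u ∈ U(F)}, where diag(α,a,d,δ) denotes the 4×4 diagonal matrix with diagonal entries α, a, d, δ. -/

import Mathlib

/-!
Statement 4: The stabilizer in R = GL₂(F) ⊠ GSp₄(F) of the 2-dimensional totally
isotropic subspace span{f₁+f₃, f₂} ⊆ F⁶ (for the right action via ι) equals exactly the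
set {([[a,b],[0,d]], diag(α,a,d,δ)·u) : a,d,α,δ ∈ F^×, b ∈ F, a·d = α·δ, u ∈ U(F)},
where U(F) is the group of upper unitriangular matrices in Sp₄(F).
-/

open Matrix

variable (F : Type*) [Field F]

def J4 : Matrix (Fin 4) (Fin 4) F :=
  Matrix.of fun i j => if (i : ℕ) + (j : ℕ) = 3 then (if (i : ℕ) < 2 then 1 else -1) else 0

def J6 : Matrix (Fin 6) (Fin 6) F :=
  Matrix.of fun i j => if (i : ℕ) + (j : ℕ) = 5 then (if (i : ℕ) < 3 then 1 else -1) else 0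

def B6 (v w : Fin 6 → F) : F := v ⬝ᵥ ((J6 F) *ᵥ w)

def IsSp4 (b : Matrix (Fin 4) (Fin 4) F) : Prop := bᵀ * J4 F * b = J4 F

/-- `(g₁, g₂) ∈ R = GL₂(F) ⊠ GSp₄(F)`. -/
def InR (p : Matrix (Fin 2) (Fin 2) F × Matrix (Fin 4) (Fin 4) F) : Prop :=
  p.1.det ≠ 0 ∧ p.2ᵀ * J4 F * p.2 = p.1.det • J4 F

def iota (a : Matrix (Fin 2) (Fin 2) F) (b : Matrix (Fin 4) (Fin 4) F) :
    Matrix (Fin 6) (Fin 6) F :=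
  !![a 0 0, 0, 0, 0, 0, a 0 1;
     0, b 0 0, b 0 1, b 0 2, b 0 3, 0;
     0, b 1 0, b 1 1, b 1 2, b 1 3, 0;
     0, b 2 0, b 2 1, b 2 2, b 2 3, 0;
     0, b 3 0, b 3 1, b 3 2, b 3 3, 0;
     a 1 0, 0, 0, 0, 0, a 1 1]

def f3 : Fin 6 → F := Pi.single (3 : Fin 6) (1 : F)
def f2 : Fin 6 → F := Pi.single (4 : Fin 6) (1 : F)
def f1 : Fin 6 → F := Pi.single (5 : Fin 6) (1 : F)

/-- `span{f₁ + f₃, f₂}` -/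
def repC : Submodule F (Fin 6 → F) := Submodule.span F {f1 F + f3 F, f2 F}

/-- Upper unitriangular matrices in Sp₄(F) (the unipotent radical of the
upper-triangular Borel subgroup of GSp₄(F)). -/
def InU (u : Matrix (Fin 4) (Fin 4) F) : Prop :=
  IsSp4 F u ∧ (∀ i j : Fin 4, j < i → u i j = 0) ∧ (∀ i : Fin 4, u i i = 1)

@[simp]
lemma cons_val_five' {α : Type*} {m : ℕ} (x : α) (u : Fin (m+5) → α) :
    vecCons x u 5 = vecHead (vecTail (vecTail (vecTail (vecTail u)))) :=
  rfl

lemma mem_repC_iff (v : Fin 6 → F) :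
    v ∈ repC F ↔ v 0 = 0 ∧ v 1 = 0 ∧ v 2 = 0 ∧ v 5 = v 3 := by
  rw [repC, Submodule.mem_span_pair]
  constructor
  · rintro ⟨x, y, rfl⟩
    simp [f1, f2, f3, Pi.single_apply]
  · rintro ⟨h0, h1, h2, h5⟩
    refine ⟨v 3, v 4, ?_⟩
    funext k
    fin_cases k <;> simp [f1, f2, f3, Pi.single_apply] <;> simp [h0, h1, h2, h5]

lemma vm1 (g1 : Matrix (Fin 2) (Fin 2) F) (g2 : Matrix (Fin 4) (Fin 4) F) :
    (iota F g1 g2).vecMulLinear (f1 F + f3 F) =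
      ![g1 1 0, g2 2 0, g2 2 1, g2 2 2, g2 2 3, g1 1 1] := by
  funext k
  fin_cases k <;>
    simp [iota, f1, f3, Matrix.vecMulLinear_apply, Matrix.vecMul, dotProduct,
      Fin.sum_univ_six, Pi.single_apply]

lemma vm2 (g1 : Matrix (Fin 2) (Fin 2) F) (g2 : Matrix (Fin 4) (Fin 4) F) :
    (iota F g1 g2).vecMulLinear (f2 F) =
      ![0, g2 3 0, g2 3 1, g2 3 2, g2 3 3, 0] := by
  funext k
  fin_cases k <;>
    simp [iota, f2, Matrix.vecMulLinear_apply, Matrix.vecMul, dotProduct,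
      Fin.sum_univ_six, Pi.single_apply]

lemma sympl_entry (g2 : Matrix (Fin 4) (Fin 4) F) (i j : Fin 4) :
    (g2ᵀ * J4 F * g2) i j =
      g2 0 i * g2 3 j + g2 1 i * g2 2 j - g2 2 i * g2 1 j - g2 3 i * g2 0 j := by
  simp [Matrix.mul_apply, J4, Fin.sum_univ_four,
    show ((3:Fin 4):ℕ) = 3 from rfl, show ((2:Fin 4):ℕ) = 2 from rfl,
    show ((1:Fin 4):ℕ) = 1 from rfl, show ((0:Fin 4):ℕ) = 0 from rfl]
  ring

theorem statement4 :
    {p : Matrix (Fin 2) (Fin 2) F × Matrix (Fin 4) (Fin 4) F |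
        InR F p ∧ Submodule.map (Matrix.vecMulLinear (iota F p.1 p.2)) (repC F) = repC F} =
    {p : Matrix (Fin 2) (Fin 2) F × Matrix (Fin 4) (Fin 4) F |
        ∃ (a b d α δ : F) (u : Matrix (Fin 4) (Fin 4) F),
          a ≠ 0 ∧ d ≠ 0 ∧ α ≠ 0 ∧ δ ≠ 0 ∧ a * d = α * δ ∧ InU F u ∧
          p = (!![a, b; 0, d], Matrix.diagonal ![α, a, d, δ] * u)} := by
  ext p
  obtain ⟨g1, g2⟩ := p
  simp only [Set.mem_setOf_eq]
  constructor
  · rintro ⟨⟨hdet, hsymp⟩, hmap⟩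
    dsimp only at hdet hsymp
    have hw1 : (iota F g1 g2).vecMulLinear (f1 F + f3 F) ∈ repC F := by
      rw [← hmap]
      exact Submodule.mem_map_of_mem (Submodule.subset_span (Set.mem_insert _ _))
    have hw2 : (iota F g1 g2).vecMulLinear (f2 F) ∈ repC F := by
      rw [← hmap]
      exact Submodule.mem_map_of_mem
        (Submodule.subset_span (Set.mem_insert_of_mem _ rfl))
    rw [vm1, mem_repC_iff] at hw1
    rw [vm2, mem_repC_iff] at hw2
    simp only [Matrix.cons_val_zero, Matrix.cons_val_one, Matrix.head_cons,
      Matrix.cons_val_two, Matrix.cons_val_three, Matrix.cons_val_four, cons_val_five',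
      Matrix.vecTail, Matrix.vecHead, Matrix.cons_val_succ, Function.comp_apply] at hw1 hw2
    obtain ⟨h10, h20, h21, h5⟩ := hw1
    obtain ⟨-, h30, h31, h32⟩ := hw2
    replace h32 : g2 3 2 = 0 := h32.symm
    -- h5 : g1 1 1 = g2 2 2
    have hdet' : g1.det = g1 0 0 * g1 1 1 := by
      rw [Matrix.det_fin_two, h10, mul_zero, sub_zero]
    rw [hdet'] at hdet
    have ha : g1 0 0 ≠ 0 := left_ne_zero_of_mul hdet
    have hd : g1 1 1 ≠ 0 := right_ne_zero_of_mul hdet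
    have E : ∀ i j : Fin 4,
        g2 0 i * g2 3 j + g2 1 i * g2 2 j - g2 2 i * g2 1 j - g2 3 i * g2 0 j =
          g1.det * J4 F i j := by
      intro i j
      rw [← sympl_entry, hsymp]
      simp [Matrix.smul_apply, smul_eq_mul]
    have E02 := E 0 2
    have E12 := E 1 2
    have E03 := E 0 3
    simp only [J4, Matrix.of_apply,
      show ((3:Fin 4):ℕ) = 3 from rfl, show ((2:Fin 4):ℕ) = 2 from rfl,
      show ((1:Fin 4):ℕ) = 1 from rfl, show ((0:Fin 4):ℕ) = 0 from rfl] at E02 E12 E03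
    norm_num at E02 E12 E03
    rw [h32, h20, h30, ← h5] at E02
    -- E02 : g2 0 0 * 0 + g2 1 0 * g1 1 1 - 0 * _ - 0 * _ = 0
    have hg10 : g2 1 0 = 0 := by
      have : g2 1 0 * g1 1 1 = 0 := by linear_combination E02
      rcases mul_eq_zero.mp this with h | h
      · exact h
      · exact absurd h hd
    rw [h32, h21, h31, ← h5, hdet'] at E12
    have hg11 : g2 1 1 = g1 0 0 := by
      have : g2 1 1 * g1 1 1 = g1 0 0 * g1 1 1 := by linear_combination E12
      exact mul_right_cancel₀ hd this
    rw [hg10, h20, h30, hdet'] at E03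
    have hαδ : g2 0 0 * g2 3 3 = g1 0 0 * g1 1 1 := by linear_combination E03
    have hα : g2 0 0 ≠ 0 := left_ne_zero_of_mul (hαδ ▸ hdet)
    have hδ : g2 3 3 ≠ 0 := right_ne_zero_of_mul (hαδ ▸ hdet)
    refine ⟨g1 0 0, g1 0 1, g1 1 1, g2 0 0, g2 3 3,
      Matrix.diagonal ![(g2 0 0)⁻¹, (g1 0 0)⁻¹, (g1 1 1)⁻¹, (g2 3 3)⁻¹] * g2,
      ha, hd, hα, hδ, hαδ.symm, ⟨?_, ?_, ?_⟩, ?_⟩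
    · -- IsSp4
      rw [IsSp4]
      have hDinvJ :
          Matrix.diagonal ![(g2 0 0)⁻¹, (g1 0 0)⁻¹, (g1 1 1)⁻¹, (g2 3 3)⁻¹] * J4 F *
            Matrix.diagonal ![(g2 0 0)⁻¹, (g1 0 0)⁻¹, (g1 1 1)⁻¹, (g2 3 3)⁻¹] =
          (g1 0 0 * g1 1 1)⁻¹ • J4 F := by
        ext i j
        fin_cases i <;> fin_cases j <;>
          simp [J4, Matrix.diagonal_mul, Matrix.mul_diagonal, Matrix.smul_apply,
            smul_eq_mul, show ((3:Fin 4):ℕ) = 3 from rfl, show ((2:Fin 4):ℕ) = 2 from rfl,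
            show ((1:Fin 4):ℕ) = 1 from rfl, show ((0:Fin 4):ℕ) = 0 from rfl] <;>
          field_simp <;>
          first
            | ring1
            | linear_combination hαδ
            | linear_combination -hαδ
      calc (Matrix.diagonal ![(g2 0 0)⁻¹, (g1 0 0)⁻¹, (g1 1 1)⁻¹, (g2 3 3)⁻¹] * g2)ᵀ *
              J4 F *
              (Matrix.diagonal ![(g2 0 0)⁻¹, (g1 0 0)⁻¹, (g1 1 1)⁻¹, (g2 3 3)⁻¹] * g2) =
          g2ᵀ * (Matrix.diagonal ![(g2 0 0)⁻¹, (g1 0 0)⁻¹, (g1 1 1)⁻¹, (g2 3 3)⁻¹] *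
            J4 F * Matrix.diagonal ![(g2 0 0)⁻¹, (g1 0 0)⁻¹, (g1 1 1)⁻¹, (g2 3 3)⁻¹]) *
            g2 := by
            rw [Matrix.transpose_mul, Matrix.diagonal_transpose]
            simp only [Matrix.mul_assoc]
        _ = (g1 0 0 * g1 1 1)⁻¹ • (g2ᵀ * J4 F * g2) := by
            rw [hDinvJ, Matrix.mul_smul, Matrix.smul_mul]
        _ = J4 F := by
            rw [hsymp, hdet', smul_smul, inv_mul_cancel₀ hdet, one_smul]
    · intro i j hij
      fin_cases i <;> fin_cases j <;>
        first
          | exact absurd hij (by decide)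
          | simp [Matrix.diagonal_mul, hg10, h20, h21, h30, h31, h32]
    · intro i
      fin_cases i <;>
        simp [Matrix.diagonal_mul, hg11, ← h5, inv_mul_cancel₀, ha, hd, hα, hδ]
    · refine Prod.ext ?_ ?_
      · ext i j
        fin_cases i <;> fin_cases j <;> simp [h10]
      · show g2 = Matrix.diagonal ![g2 0 0, g1 0 0, g1 1 1, g2 3 3] *
          (Matrix.diagonal ![(g2 0 0)⁻¹, (g1 0 0)⁻¹, (g1 1 1)⁻¹, (g2 3 3)⁻¹] * g2)
        ext i j
        rw [Matrix.diagonal_mul, Matrix.diagonal_mul]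
        fin_cases i <;>
          simp [mul_inv_cancel_left₀, ha, hd, hα, hδ]
  · rintro ⟨a, b, d, α, δ, u, ha, hd, hα, hδ, had, ⟨husp, hutri, hudiag⟩, hp⟩
    rw [Prod.mk.injEq] at hp
    obtain ⟨hp1, hp2⟩ := hp
    subst hp1; subst hp2
    have hdet : (!![a, b; 0, d]).det = a * d := by
      simp [Matrix.det_fin_two_of]
    have hDJD : Matrix.diagonal ![α, a, d, δ] * J4 F * Matrix.diagonal ![α, a, d, δ] =
        (a * d) • J4 F := by
      ext i j
      fin_cases i <;> fin_cases j <;>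
        simp [J4, Matrix.diagonal_mul, Matrix.mul_diagonal, Matrix.smul_apply,
          smul_eq_mul, show ((3:Fin 4):ℕ) = 3 from rfl, show ((2:Fin 4):ℕ) = 2 from rfl,
          show ((1:Fin 4):ℕ) = 1 from rfl, show ((0:Fin 4):ℕ) = 0 from rfl] <;>
        first
          | ring1
          | linear_combination had
          | linear_combination -had

    have hsymp : (Matrix.diagonal ![α, a, d, δ] * u)ᵀ * J4 F *
        (Matrix.diagonal ![α, a, d, δ] * u) = (!![a, b; 0, d]).det • J4 F := by
      calc (Matrix.diagonal ![α, a, d, δ] * u)ᵀ * J4 F *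
            (Matrix.diagonal ![α, a, d, δ] * u) =
          uᵀ * (Matrix.diagonal ![α, a, d, δ] * J4 F * Matrix.diagonal ![α, a, d, δ]) *
            u := by
            rw [Matrix.transpose_mul, Matrix.diagonal_transpose]
            simp only [Matrix.mul_assoc]
        _ = (a * d) • (uᵀ * J4 F * u) := by
            rw [hDJD, Matrix.mul_smul, Matrix.smul_mul]
        _ = (!![a, b; 0, d]).det • J4 F := by rw [husp, hdet]
    refine ⟨⟨by rw [hdet]; exact mul_ne_zero ha hd, hsymp⟩, ?_⟩
    have hv1 : (iota F !![a, b; 0, d] (Matrix.diagonal ![α, a, d, δ] * u)).vecMulLinear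
        (f1 F + f3 F) = d • (f1 F + f3 F) + (d * u 2 3) • f2 F := by
      rw [vm1]
      funext k
      fin_cases k <;>
        simp [f1, f2, f3, Pi.single_apply, Matrix.diagonal_mul,
          hutri 2 0 (by decide), hutri 2 1 (by decide), hudiag 2]
    have hv2 : (iota F !![a, b; 0, d] (Matrix.diagonal ![α, a, d, δ] * u)).vecMulLinear
        (f2 F) = δ • f2 F := by
      rw [vm2]
      funext k
      fin_cases k <;>
        simp [f1, f2, f3, Pi.single_apply, Matrix.diagonal_mul,
          hutri 3 0 (by decide), hutri 3 1 (by decide), hutri 3 2 (by decide), hudiag 3]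
    conv_lhs => rw [repC, Submodule.map_span, Set.image_pair, hv1, hv2]
    rw [repC]
    apply Submodule.span_eq_span
    · rintro x (rfl | rfl)
      · exact SetLike.mem_coe.mpr (Submodule.mem_span_pair.mpr ⟨d, d * u 2 3, rfl⟩)
      · exact SetLike.mem_coe.mpr
          (Submodule.mem_span_pair.mpr ⟨0, δ, by rw [zero_smul, zero_add]⟩)
    · rintro x (rfl | rfl)
      · refine SetLike.mem_coe.mpr (Submodule.mem_span_pair.mpr
          ⟨d⁻¹, -(d⁻¹ * (d * u 2 3) * δ⁻¹), ?_⟩)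
        match_scalars <;> field_simp <;> ring
      · refine SetLike.mem_coe.mpr (Submodule.mem_span_pair.mpr ⟨0, δ⁻¹, ?_⟩)
        match_scalars <;> field_simp <;> ring
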